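/- arXiv:1403.0263 — 3 statements merged into one kernel-verified Lean document; each statement's English description precedes it below -/
import Mathlib

section
/- The set of real numbers a for which the family (√(k² + a²))_{k∈ℕ} is linearly dependent over ℚ (i.e., there exist finitely many indices k_1 < … < k_m and rational numbers α_1, …, α_m, not all zero, with ∑_j α_j·√(k_j² + a²) = 0) is countable. In particular, for almost every real a the family (√(k² + a²))_{k∈ℕ} is linearly independent over ℚ. -/
open MeasureTheory

-- countable isolated set
lemma countable_of_isolated' {s : Set ℝ}
    (h : ∀ a ∈ s, ∃ U : Set ℝ, IsOpen U ∧ a ∈ U ∧ U ∩ s ⊆ {a}) : s.Countable := by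
  have hB := TopologicalSpace.isBasis_countableBasis ℝ
  have hBc := TopologicalSpace.countable_countableBasis ℝ
  have key : ∀ a ∈ s, ∃ b ∈ TopologicalSpace.countableBasis ℝ, a ∈ b ∧ b ∩ s ⊆ {a} := by
    intro a ha
    obtain ⟨U, hUo, haU, hUs⟩ := h a ha
    obtain ⟨b, hb, hab, hbU⟩ := hB.exists_subset_of_mem_open haU hUo
    exact ⟨b, hb, hab, fun x hx => hUs ⟨hbU hx.1, hx.2⟩⟩
  choose! b hb hab hbs using key
  refine Set.MapsTo.countable_of_injOn (fun a ha => hb a ha) ?_ hBc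
  intro a ha a' ha' hbb
  have : a' ∈ b a ∩ s := ⟨hbb ▸ hab a' ha', ha'⟩
  exact (hbs a ha this).symm

lemma analyticAt_rlog {x : ℝ} (hx : 0 < x) : AnalyticAt ℝ Real.log x := by
  have h1 : AnalyticAt ℝ (fun y : ℝ => Complex.reCLM (Complex.log (Complex.ofRealCLM y))) x := by
    apply (Complex.reCLM.analyticAt _).comp
    exact AnalyticAt.comp (g := Complex.log) ((analyticAt_clog (by simp [Complex.mem_slitPlane_iff, hx])).restrictScalars) (Complex.ofRealCLM.analyticAt x)
  apply h1.congr
  filter_upwards [eventually_gt_nhds hx] with y hy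
  simp only [Complex.reCLM_apply, Complex.ofRealCLM_apply]
  rw [← Complex.ofReal_log hy.le, Complex.ofReal_re]

lemma analyticAt_rsqrt {x : ℝ} (hx : 0 < x) : AnalyticAt ℝ Real.sqrt x := by
  have h1 : AnalyticAt ℝ (fun y : ℝ => Real.exp (Real.log y / 2)) x :=
    analyticAt_rexp.comp ((analyticAt_rlog hx).div analyticAt_const (by norm_num))
  apply h1.congr
  filter_upwards [eventually_gt_nhds hx] with y hy
  rw [Real.sqrt_eq_rpow, Real.rpow_def_of_pos hy]
  ring_nf

-- power sums vanish => coefficients vanish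
lemma powsum_zero {m : ℕ} (x : Fin m → ℝ) (hx : Function.Injective x)
    (γ : Fin m → ℝ) (h : ∀ n : ℕ, ∑ j, γ j * x j ^ n = 0) : ∀ j, γ j = 0 := by
  have hp : ∀ p : Polynomial ℝ, ∑ j, γ j * p.eval (x j) = 0 := by
    intro p
    induction p using Polynomial.induction_on with
    | C c =>
        simp only [Polynomial.eval_C]
        have := h 0
        simp only [pow_zero, mul_one] at this
        rw [← Finset.sum_mul, this, zero_mul]
    | add p q hp hq =>
        simp only [Polynomial.eval_add, mul_add, Finset.sum_add_distrib, hp, hq, add_zero]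
    | monomial n c _ =>
        simp only [Polynomial.eval_mul, Polynomial.eval_C, Polynomial.eval_pow,
          Polynomial.eval_X]
        have := h (n + 1)
        calc ∑ j, γ j * (c * x j ^ (n+1)) = c * ∑ j, γ j * x j ^ (n+1) := by
              rw [Finset.mul_sum]; congr 1; ext j; ring
          _ = 0 := by rw [this, mul_zero]
  intro j0
  have := hp (∏ i ∈ Finset.univ.erase j0, (Polynomial.X - Polynomial.C (x i)))
  rw [Fintype.sum_eq_single j0 (fun j hj => ?_)] at this
  · have hne : Polynomial.eval (x j0) (∏ i ∈ Finset.univ.erase j0,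
        (Polynomial.X - Polynomial.C (x i))) ≠ 0 := by
      rw [Polynomial.eval_prod]
      apply Finset.prod_ne_zero_iff.2
      intro i hi
      simp only [Polynomial.eval_sub, Polynomial.eval_X, Polynomial.eval_C, sub_ne_zero]
      exact fun hc => (Finset.mem_erase.1 hi).1 (hx hc.symm)
    exact (mul_eq_zero.1 this).resolve_right hne
  · rw [Polynomial.eval_prod]
    have : Polynomial.eval (x j) (Polynomial.X - Polynomial.C (x j)) = 0 := by simp
    rw [Finset.prod_eq_zero (Finset.mem_erase.2 ⟨hj, Finset.mem_univ j⟩) this, mul_zero]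

lemma rpow_step {m : ℕ} (c : Fin m → ℝ) (hc : ∀ j, 0 ≤ c j) (α : Fin m → ℝ) (b : ℝ) (hb : b ≠ 0)
    (h : ∀ u ∈ Set.Ioi (0:ℝ), ∑ j, α j * (c j + u) ^ b = 0) :
    ∀ u ∈ Set.Ioi (0:ℝ), ∑ j, α j * (c j + u) ^ (b - 1) = 0 := by
  intro u hu
  have hu0 : (0:ℝ) < u := hu
  have hd : HasDerivAt (fun v => ∑ j, α j * (c j + v) ^ b)
      (∑ j, α j * (b * (c j + u) ^ (b - 1))) u := by
    apply HasDerivAt.fun_sum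
    intro j _
    have h1 : HasDerivAt (fun v : ℝ => c j + v) 1 u := by
      simpa using (hasDerivAt_id u).const_add (c j)
    have h2 : HasDerivAt (fun y : ℝ => y ^ b) (b * (c j + u) ^ (b - 1)) (c j + u) :=
      Real.hasDerivAt_rpow_const (Or.inl (by have := hc j; intro hz; nlinarith))
    simpa using (h2.comp u h1).const_mul (α j)
  have hzero : HasDerivAt (fun v => ∑ j, α j * (c j + v) ^ b) 0 u := by
    have : (fun v => ∑ j, α j * (c j + v) ^ b) =ᶠ[nhds u] (fun _ => (0:ℝ)) := by
      filter_upwards [isOpen_Ioi.mem_nhds hu] with v hv using h v hv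
    exact (hasDerivAt_const u (0:ℝ)).congr_of_eventuallyEq this
  have := hd.unique hzero
  have h2 : b * ∑ j, α j * (c j + u) ^ (b - 1) = 0 := by
    rw [Finset.mul_sum, ← this]; congr 1; ext j; ring
  exact (mul_eq_zero.1 h2).resolve_left hb

lemma moments {m : ℕ} (c : Fin m → ℝ) (hc : ∀ j, 0 ≤ c j) (α : Fin m → ℝ)
    (h : ∀ u ∈ Set.Ioi (0:ℝ), ∑ j, α j * (c j + u) ^ ((1:ℝ)/2) = 0) :
    ∀ n : ℕ, ∀ u ∈ Set.Ioi (0:ℝ), ∑ j, α j * (c j + u) ^ ((1:ℝ)/2 - n) = 0 := by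
  intro n
  induction n with
  | zero => simpa using h
  | succ n ih =>
      have hb : (1:ℝ)/2 - n ≠ 0 := by
        intro hc'
        have : (n:ℝ) = 1/2 := by linarith
        rcases Nat.eq_zero_or_pos n with h0 | h0
        · rw [h0] at this; norm_num at this
        · have : (1:ℝ) ≤ n := by exact_mod_cast h0
          linarith
      have := rpow_step c hc α ((1:ℝ)/2 - n) hb ih
      intro u hu
      have h2 := this u hu
      convert h2 using 3 with j
      push_cast
      ring_nf

lemma not_eqzero {m : ℕ} (k : Fin m → ℕ) (α : Fin m → ℝ) (hk : StrictMono k)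
    (hα : ∃ j, α j ≠ 0)
    (h0 : ∀ a ∈ Set.Ioi (0:ℝ), ∑ j, α j * Real.sqrt ((k j : ℝ) ^ 2 + a ^ 2) = 0) : False := by
  set c : Fin m → ℝ := fun j => (k j : ℝ) ^ 2 with hc_def
  have hc : ∀ j, 0 ≤ c j := fun j => by positivity
  have hG : ∀ u ∈ Set.Ioi (0:ℝ), ∑ j, α j * (c j + u) ^ ((1:ℝ)/2) = 0 := by
    intro u hu
    have hu0 : (0:ℝ) < u := hu
    have ha := h0 (Real.sqrt u) (Set.mem_Ioi.2 (Real.sqrt_pos.2 hu0))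
    rw [← ha]
    apply Finset.sum_congr rfl
    intro j _
    rw [Real.sq_sqrt hu0.le, ← Real.rpow_natCast]
    rw [Real.sqrt_eq_rpow]
    norm_num
    exact Or.inl rfl
  have hmom := moments c hc α hG
  have key : ∀ n : ℕ, ∑ j, (α j * (c j + 1) ^ ((1:ℝ)/2)) * ((c j + 1)⁻¹) ^ n = 0 := by
    intro n
    have := hmom n 1 (by norm_num)
    rw [← this]
    apply Finset.sum_congr rfl
    intro j _
    have hcj : (0:ℝ) < c j + 1 := by have := hc j; linarith
    rw [inv_pow, ← Real.rpow_natCast (c j + 1) n, ← Real.rpow_neg hcj.le,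
      mul_assoc, ← Real.rpow_add hcj]
    ring_nf
  have hxinj : Function.Injective (fun j => ((c j + 1)⁻¹ : ℝ)) := by
    intro i j hij
    simp only at hij
    have h1 : c i + 1 = c j + 1 := by
      have hi : (0:ℝ) < c i + 1 := by have := hc i; linarith
      have hj : (0:ℝ) < c j + 1 := by have := hc j; linarith
      exact inv_injective hij
    have h2 : (k i : ℝ) ^ 2 = (k j : ℝ) ^ 2 := by
      simpa [hc_def] using h1
    have h3 : k i = k j := by
      have : ((k i ^ 2 : ℕ) : ℝ) = ((k j ^ 2 : ℕ) : ℝ) := by push_cast; exact h2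
      exact Nat.pow_left_injective (by norm_num) (Nat.cast_injective this)
    exact hk.injective h3
  have hγ := powsum_zero _ hxinj _ key
  obtain ⟨j, hj⟩ := hα
  have := hγ j
  have hcj : (0:ℝ) < c j + 1 := by have := hc j; linarith
  have hpos : (0:ℝ) < (c j + 1) ^ ((1:ℝ)/2) := Real.rpow_pos_of_pos hcj _
  exact hj (by
    rcases mul_eq_zero.1 this with h | h
    · exact h
    · exact absurd h hpos.ne')


lemma zeroset_countable {m : ℕ} (k : Fin m → ℕ) (α : Fin m → ℝ) (hk : StrictMono k)
    (hα : ∃ j, α j ≠ 0) :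
    {a : ℝ | ∑ j, α j * Real.sqrt ((k j : ℝ) ^ 2 + a ^ 2) = 0}.Countable := by
  set f : ℝ → ℝ := fun a => ∑ j, α j * Real.sqrt ((k j : ℝ) ^ 2 + a ^ 2) with hf_def
  set S := {a : ℝ | f a = 0} with hS_def
  have hf : AnalyticOnNhd ℝ f (Set.Ioi 0) := by
    intro a ha
    apply Finset.analyticAt_fun_sum
    intro j _
    apply AnalyticAt.mul analyticAt_const
    have hpos : (0:ℝ) < (k j : ℝ) ^ 2 + a ^ 2 := by
      have : (0:ℝ) < a := ha
      positivity
    have hinner : AnalyticAt ℝ (fun x : ℝ => (k j : ℝ) ^ 2 + x ^ 2) a :=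
      analyticAt_const.add (analyticAt_id.pow 2)
    have houter : AnalyticAt ℝ Real.sqrt ((k j : ℝ) ^ 2 + a ^ 2) := analyticAt_rsqrt hpos
    have hcomp : AnalyticAt ℝ (Real.sqrt ∘ fun x : ℝ => (k j : ℝ) ^ 2 + x ^ 2) a :=
      AnalyticAt.comp (f := fun x : ℝ => (k j : ℝ) ^ 2 + x ^ 2) houter hinner
    exact hcomp
  -- f is not identically zero on Ioi 0
  have hnz : ¬ Set.EqOn f 0 (Set.Ioi 0) := by
    intro hcon
    exact not_eqzero k α hk hα (fun a ha => hcon ha)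
  -- S ∩ Ioi 0 countable
  have hpos_cnt : (S ∩ Set.Ioi 0).Countable := by
    apply countable_of_isolated'
    rintro a ⟨haS, haI⟩
    rcases (hf a haI).eventually_eq_zero_or_eventually_ne_zero with hcase | hcase
    · exact absurd (hf.eqOn_zero_of_preconnected_of_eventuallyEq_zero
        isPreconnected_Ioi haI hcase) hnz
    · rw [eventually_nhdsWithin_iff, eventually_nhds_iff] at hcase
      obtain ⟨t, ht, hto, hta⟩ := hcase
      refine ⟨t, hto, hta, ?_⟩
      rintro x ⟨hxt, hxS, -⟩
      by_contra hne
      exact ht x hxt (by simpa using hne) hxS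
  have hsub : S ⊆ {0} ∪ (S ∩ Set.Ioi 0) ∪ (Neg.neg '' (S ∩ Set.Ioi 0)) := by
    intro a ha
    rcases lt_trichotomy a 0 with h | h | h
    · right
      refine ⟨-a, ⟨?_, by simpa using h⟩, by simp⟩
      simpa [hS_def, hf_def, neg_pow] using ha
    · left; left; simp [h]
    · left; right; exact ⟨ha, h⟩
  exact Set.Countable.mono hsub
    (((Set.countable_singleton 0).union hpos_cnt).union (hpos_cnt.image _))


open MeasureTheory

theorem stmt_4 :
    {a : ℝ | ∃ (m : ℕ) (k : Fin m → ℕ) (α : Fin m → ℚ), StrictMono k ∧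
        (∃ j, α j ≠ 0) ∧
        ∑ j, (α j : ℝ) * Real.sqrt ((k j : ℝ) ^ 2 + a ^ 2) = 0}.Countable ∧
    ∀ᵐ a ∂(volume : Measure ℝ),
      LinearIndependent ℚ (fun k : ℕ => Real.sqrt ((k : ℝ) ^ 2 + a ^ 2)) := by
  set Bad := {a : ℝ | ∃ (m : ℕ) (k : Fin m → ℕ) (α : Fin m → ℚ), StrictMono k ∧
        (∃ j, α j ≠ 0) ∧
        ∑ j, (α j : ℝ) * Real.sqrt ((k j : ℝ) ^ 2 + a ^ 2) = 0} with hBad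
  have hcnt : Bad.Countable := by
    have hsub : Bad ⊆ ⋃ i : Σ m : ℕ, (Fin m → ℕ) × (Fin m → ℚ),
        {a : ℝ | StrictMono i.2.1 ∧ (∃ j, i.2.2 j ≠ 0) ∧
          ∑ j, (i.2.2 j : ℝ) * Real.sqrt ((i.2.1 j : ℝ) ^ 2 + a ^ 2) = 0} := by
      rintro a ⟨m, k, α, hk, hα, hsum⟩
      exact Set.mem_iUnion.2 ⟨⟨m, k, α⟩, hk, hα, hsum⟩
    refine Set.Countable.mono hsub (Set.countable_iUnion fun i => ?_)
    obtain ⟨m, k, α⟩ := i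
    by_cases hcond : StrictMono k ∧ ∃ j, α j ≠ 0
    · obtain ⟨j0, hj0⟩ := hcond.2
      refine Set.Countable.mono (fun a ha => ha.2.2) ?_
      exact zeroset_countable k (fun j => (α j : ℝ)) hcond.1
        ⟨j0, by exact_mod_cast hj0⟩
    · refine Set.Countable.mono (fun a ha => ?_) Set.countable_empty
      exact absurd ⟨ha.1, ha.2.1⟩ hcond
  refine ⟨hcnt, ?_⟩
  have hnull : volume Bad = 0 := Set.Countable.measure_zero hcnt volume
  rw [ae_iff]
  apply measure_mono_null ?_ hnull
  intro a ha
  simp only [Set.mem_setOf_eq] at ha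
  by_contra hmem
  apply ha
  rw [linearIndependent_iff']
  intro s g hsum i hi
  by_contra hgi
  apply hmem
  rw [hBad]
  set m := s.card with hm
  set e := s.orderIsoOfFin rfl with he
  refine ⟨m, fun j => (e j : ℕ), fun j => g (e j : ℕ), ?_, ?_, ?_⟩
  · intro j1 j2 hj
    exact Subtype.coe_lt_coe.2 (e.strictMono hj)
  · exact ⟨e.symm ⟨i, hi⟩, by simpa using hgi⟩
  · have hs : ∑ j : Fin m, ((g (e j : ℕ) : ℝ) * Real.sqrt (((e j : ℕ) : ℝ) ^ 2 + a ^ 2))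
        = ∑ x ∈ s, (g x : ℝ) * Real.sqrt ((x : ℝ) ^ 2 + a ^ 2) := by
      rw [← Finset.sum_coe_sort s (fun x => (g (x:ℕ) : ℝ) * Real.sqrt (((x:ℕ) : ℝ) ^ 2 + a ^ 2))]
      exact Equiv.sum_comp e.toEquiv (fun x : s => (g (x:ℕ) : ℝ) * Real.sqrt (((x:ℕ):ℝ)^2 + a^2))
    rw [hs, ← hsum]
    apply Finset.sum_congr rfl
    intro x _
    rw [Rat.smul_def, Rat.cast_def]
end

section
/- If a is a transcendental real number, then the family (√(k² + a²))_{k∈ℕ} is linearly independent over ℚ: whenever k_1 < … < k_m are natural numbers and α_1, …, α_m are rational numbers with ∑_{j=1}^m α_j·√(k_j² + a²) = 0, all α_j are zero. -/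
open Finset Polynomial Matrix

section Stmt5Aux

/-- Vandermonde-style: if all moments vanish with distinct nodes, coefficients vanish. -/
lemma moments_zero {n : ℕ} (d x : Fin n → ℝ) (hx : Function.Injective x)
    (H : ∀ r : ℕ, ∑ j, d j * x j ^ r = 0) : ∀ j, d j = 0 := by
  intro j0
  set q : Polynomial ℝ := ∏ i ∈ Finset.univ.erase j0, (X - C (x i)) with hq
  have hsum : ∑ j, d j * q.eval (x j) = 0 := by
    have : ∀ j, d j * q.eval (x j)
        = ∑ r ∈ Finset.range (q.natDegree + 1), q.coeff r * (d j * x j ^ r) := by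
      intro j
      rw [Polynomial.eval_eq_sum_range, Finset.mul_sum]
      refine Finset.sum_congr rfl fun r _ => by ring
    rw [Finset.sum_congr rfl fun j _ => this j, Finset.sum_comm]
    refine Finset.sum_eq_zero fun r _ => ?_
    rw [← Finset.mul_sum, H r, mul_zero]
  have heval0 : ∀ i, i ≠ j0 → q.eval (x i) = 0 := by
    intro i hi
    rw [hq, Polynomial.eval_prod]
    refine Finset.prod_eq_zero (Finset.mem_erase.2 ⟨hi, Finset.mem_univ i⟩) ?_
    simp
  have hne : q.eval (x j0) ≠ 0 := by
    rw [hq, Polynomial.eval_prod]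
    refine Finset.prod_ne_zero_iff.2 fun i hi => ?_
    have : x i ≠ x j0 := fun hxx => (Finset.mem_erase.1 hi).1 (hx hxx)
    simp [sub_ne_zero]
    exact fun hxx => this hxx.symm
  have : ∑ j, d j * q.eval (x j) = d j0 * q.eval (x j0) := by
    refine Finset.sum_eq_single j0 (fun i _ hi => by rw [heval0 i hi, mul_zero]) ?_
    exact fun hj => absurd (Finset.mem_univ j0) hj
  rw [this] at hsum
  exact (mul_eq_zero.1 hsum).resolve_right hne

/-- differentiating a vanishing sum of rpow's on an open interval -/
lemma deriv_step {n : ℕ} (c κ : Fin n → ℝ) (p q : ℝ) (hp : 0 < p)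
    (hκ : ∀ j, 0 ≤ κ j) (e : ℝ)
    (H : ∀ u ∈ Set.Ioo p q, ∑ j, c j * (κ j + u) ^ e = 0) :
    ∀ u ∈ Set.Ioo p q, ∑ j, (c j * e) * (κ j + u) ^ (e - 1) = 0 := by
  intro u hu
  have hupos : 0 < u := lt_trans hp hu.1
  have hder : HasDerivAt (fun v => ∑ j, c j * (κ j + v) ^ e)
      (∑ j, (c j * e) * (κ j + u) ^ (e - 1)) u := by
    refine HasDerivAt.fun_sum fun j _ => ?_
    have hbase : (0:ℝ) < κ j + u := by have := hκ j; linarith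
    have h1 : HasDerivAt (fun v : ℝ => κ j + v) 1 u := by
      simpa using (hasDerivAt_id u).const_add (κ j)
    have h2 : HasDerivAt (fun x : ℝ => x ^ e) (e * (κ j + u) ^ (e - 1)) (κ j + u) :=
      Real.hasDerivAt_rpow_const (Or.inl hbase.ne')
    have := (h2.comp u h1)
    have h3 : HasDerivAt (fun v : ℝ => (κ j + v) ^ e) (e * (κ j + u) ^ (e - 1)) u := by
      rw [mul_one] at this
      exact this
    simpa [mul_assoc, mul_comm, mul_left_comm] using h3.const_mul (c j)
  have hzero : (fun v => ∑ j, c j * (κ j + v) ^ e) =ᶠ[nhds u] (fun _ => (0:ℝ)) := by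
    filter_upwards [isOpen_Ioo.mem_nhds hu] with v hv using H v hv
  have hder0 : HasDerivAt (fun _ : ℝ => (0:ℝ))
      (∑ j, (c j * e) * (κ j + u) ^ (e - 1)) u := hder.congr_of_eventuallyEq hzero.symm
  have := hder0.unique (hasDerivAt_const u 0)
  exact this

/-- If a combination of square roots vanishes on an open interval, coefficients vanish. -/
lemma interval_vanish {n : ℕ} (c : Fin n → ℝ) (κ : Fin n → ℝ)
    (hκ : ∀ j, 0 ≤ κ j) (hκinj : Function.Injective κ)
    (p q : ℝ) (hp : 0 < p) (hpq : p < q)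
    (H : ∀ u ∈ Set.Ioo p q, ∑ j, c j * Real.sqrt (κ j + u) = 0) :
    ∀ j, c j = 0 := by
  -- iterated derivatives
  have key : ∀ r : ℕ, ∀ u ∈ Set.Ioo p q,
      ∑ j, c j * (κ j + u) ^ ((1:ℝ)/2 - r) = 0 := by
    intro r
    induction r with
    | zero =>
      intro u hu
      have := H u hu
      rw [← this]
      refine Finset.sum_congr rfl fun j _ => ?_
      have hb : (0:ℝ) ≤ κ j + u := by have := hκ j; have := hu.1; nlinarith
      rw [Real.sqrt_eq_rpow]
      norm_num
    | succ r ih =>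
      have step := deriv_step c κ p q hp hκ ((1:ℝ)/2 - r) ih
      intro u hu
      have hstep := step u hu
      have he : ((1:ℝ)/2 - r) ≠ 0 := by
        intro hcon
        have : (2:ℝ) * r = 1 := by linarith
        have : (2 * r : ℕ) = 1 := by exact_mod_cast this
        omega
      have hexp : ((1:ℝ)/2 - r) - 1 = (1:ℝ)/2 - (r+1 : ℕ) := by push_cast; ring
      rw [hexp] at hstep
      have : ((1:ℝ)/2 - r) * ∑ j, c j * (κ j + u) ^ ((1:ℝ)/2 - (r+1:ℕ)) = 0 := by
        rw [Finset.mul_sum, ← hstep]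
        exact Finset.sum_congr rfl fun j _ => by ring
      exact (mul_eq_zero.1 this).resolve_left he
  -- evaluate at midpoint
  set u₀ : ℝ := (p + q) / 2 with hu₀
  have hu₀mem : u₀ ∈ Set.Ioo p q := by constructor <;> (rw [hu₀]; linarith)
  have hu₀pos : 0 < u₀ := lt_trans hp hu₀mem.1
  have hbase : ∀ j, (0:ℝ) < κ j + u₀ := fun j => by have := hκ j; linarith
  set d : Fin n → ℝ := fun j => c j * (κ j + u₀) ^ ((1:ℝ)/2) with hd
  set x : Fin n → ℝ := fun j => (κ j + u₀)⁻¹ with hx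
  have hmom : ∀ r : ℕ, ∑ j, d j * x j ^ r = 0 := by
    intro r
    have := key r u₀ hu₀mem
    rw [← this]
    refine Finset.sum_congr rfl fun j _ => ?_
    rw [hd, hx]
    have : (κ j + u₀) ^ ((1:ℝ)/2 - r) = (κ j + u₀) ^ ((1:ℝ)/2) / (κ j + u₀) ^ (r:ℝ) :=
      Real.rpow_sub (hbase j) _ _
    rw [this, Real.rpow_natCast]
    field_simp
    rw [_root_.one_div_pow, mul_one_div]
  have hxinj : Function.Injective x := by
    intro i j hij
    rw [hx] at hij
    simp only at hij
    have := inv_injective hij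
    have : κ i = κ j := by linarith [add_left_injective u₀ this]
    exact hκinj this
  have hdz := moments_zero d x hxinj hmom
  intro j
  have := hdz j
  rw [hd] at this
  simp only at this
  rcases mul_eq_zero.1 this with h1 | h2
  · exact h1
  · exact absurd h2 (Real.rpow_pos_of_pos (hbase j) _).ne'




noncomputable def sg (b : Bool) : ℝ := if b then 1 else -1

lemma sg_mul_self (b : Bool) : sg b * sg b = 1 := by cases b <;> simp [sg]

lemma sg_ne_zero (b : Bool) : sg b ≠ 0 := by cases b <;> norm_num [sg]

noncomputable def yy {m : ℕ} (k : Fin m → ℕ) (u : ℝ) (j : Fin m) : ℝ :=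
  Real.sqrt ((k j : ℝ) ^ 2 + u)

lemma yy_pos {m : ℕ} (k : Fin m → ℕ) {u : ℝ} (hu : 0 < u) (j : Fin m) : 0 < yy k u j :=
  Real.sqrt_pos.2 (by positivity)

lemma yy_sq {m : ℕ} (k : Fin m → ℕ) {u : ℝ} (hu : 0 < u) (j : Fin m) :
    yy k u j * yy k u j = (k j : ℝ) ^ 2 + u :=
  Real.mul_self_sqrt (by positivity)

noncomputable def ff {m : ℕ} (k : Fin m → ℕ) (α : Fin m → ℚ) (ε : Fin m → Bool) (u : ℝ) : ℝ :=
  ∑ j, sg (ε j) * (α j : ℝ) * yy k u j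

noncomputable def MM {m : ℕ} (k : Fin m → ℕ) (α : Fin m → ℚ) :
    Matrix (Fin m → Bool) (Fin m → Bool) (Polynomial ℚ) :=
  fun S T => ∑ j, if T = Function.update S j (!S j) then
      Polynomial.C (α j) * (if S j then Polynomial.X + Polynomial.C ((k j : ℚ) ^ 2) else 1)
    else 0

noncomputable def WW {m : ℕ} (k : Fin m → ℕ) (u : ℝ) :
    Matrix (Fin m → Bool) (Fin m → Bool) ℝ :=
  fun S ε => ∏ j, if S j then sg (ε j) * yy k u j else 1

lemma WW_update {m : ℕ} (k : Fin m → ℕ) (u : ℝ) (S : Fin m → Bool) (ε : Fin m → Bool)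
    (j : Fin m) (b : Bool) :
    WW k u (Function.update S j b) ε
      = (if b then sg (ε j) * yy k u j else 1)
        * ∏ i ∈ Finset.univ.erase j, (if S i then sg (ε i) * yy k u i else 1) := by
  rw [WW, ← Finset.mul_prod_erase Finset.univ _ (Finset.mem_univ j)]
  congr 1
  · simp
  · refine Finset.prod_congr rfl fun i hi => ?_
    rw [Function.update_of_ne (Finset.ne_of_mem_erase hi)]

lemma WW_self {m : ℕ} (k : Fin m → ℕ) (u : ℝ) (S : Fin m → Bool) (ε : Fin m → Bool) (j : Fin m) :
    WW k u S ε
      = (if S j then sg (ε j) * yy k u j else 1)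
        * ∏ i ∈ Finset.univ.erase j, (if S i then sg (ε i) * yy k u i else 1) := by
  rw [WW, ← Finset.mul_prod_erase Finset.univ _ (Finset.mem_univ j)]

lemma keyB {m : ℕ} (k : Fin m → ℕ) (α : Fin m → ℚ) {u : ℝ} (hu : 0 < u) :
    (MM k α).map (Polynomial.aeval u) * WW k u
      = WW k u * Matrix.diagonal (fun ε => ff k α ε u) := by
  ext S ε
  rw [Matrix.mul_apply, Matrix.mul_diagonal]
  have lhs_eq : ∑ T, ((MM k α).map (Polynomial.aeval u)) S T * WW k u T ε
      = ∑ j, ((α j : ℝ) * (if S j then u + (k j : ℝ) ^ 2 else 1))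
          * WW k u (Function.update S j (!S j)) ε := by
    simp only [Matrix.map_apply, MM, map_sum, Finset.sum_mul]
    rw [Finset.sum_comm]
    refine Finset.sum_congr rfl fun j _ => ?_
    rw [Finset.sum_eq_single (Function.update S j (!S j))]
    · rw [if_pos rfl, _root_.map_mul]
      congr 2
      · simp
      · split <;> simp
    · intro T _ hT
      rw [if_neg hT, map_zero, zero_mul]
    · intro hT; exact absurd (Finset.mem_univ _) hT
  rw [lhs_eq]
  have term_eq : ∀ j, ((α j : ℝ) * (if S j then u + (k j : ℝ) ^ 2 else 1))
      * WW k u (Function.update S j (!S j)) ε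
      = (sg (ε j) * (α j : ℝ) * yy k u j) * WW k u S ε := by
    intro j
    rw [WW_update, WW_self k u S ε j]
    cases hSj : S j with
    | false =>
      simp only [hSj, Bool.not_false]
      norm_num
      ring
    | true =>
      simp only [hSj, Bool.not_true]
      norm_num
      have e1 : sg (ε j) * (α j : ℝ) * yy k u j * (sg (ε j) * yy k u j
            * ∏ i ∈ Finset.univ.erase j, (if S i then sg (ε i) * yy k u i else 1))
          = (sg (ε j) * sg (ε j)) * (yy k u j * yy k u j) * (α j : ℝ)
            * ∏ i ∈ Finset.univ.erase j, (if S i then sg (ε i) * yy k u i else 1) := by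
        ring
      rw [e1, sg_mul_self, yy_sq k hu j]
      ring
  rw [Finset.sum_congr rfl fun j _ => term_eq j, ← Finset.sum_mul]
  unfold ff
  ring

noncomputable def WW' {m : ℕ} (k : Fin m → ℕ) (u : ℝ) :
    Matrix (Fin m → Bool) (Fin m → Bool) ℝ :=
  fun ε S => ∏ j, if S j then sg (ε j) * (yy k u j)⁻¹ else 1

lemma WW'_mul {m : ℕ} (k : Fin m → ℕ) {u : ℝ} (hu : 0 < u) :
    WW' k u * WW k u = ((2:ℝ) ^ m) • (1 : Matrix (Fin m → Bool) (Fin m → Bool) ℝ) := by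
  ext ε ε'
  rw [Matrix.mul_apply]
  have entry : ∀ S : Fin m → Bool, WW' k u ε S * WW k u S ε'
      = ∏ j, (if S j then sg (ε j) * sg (ε' j) else 1) := by
    intro S
    rw [WW', WW, ← Finset.prod_mul_distrib]
    refine Finset.prod_congr rfl fun j _ => ?_
    cases hSj : S j
    · simp
    · simp only [if_true]
      have hy := (yy_pos k hu j).ne'
      field_simp
  rw [Finset.sum_congr rfl fun S _ => entry S]
  have swap : ∑ S : Fin m → Bool, ∏ j, (if S j then sg (ε j) * sg (ε' j) else 1)
      = ∏ j : Fin m, ((sg (ε j) * sg (ε' j)) + 1) := by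
    have := Finset.prod_univ_sum (fun _ : Fin m => (Finset.univ : Finset Bool))
      (fun j b => if b then sg (ε j) * sg (ε' j) else 1)
    rw [Fintype.piFinset_univ] at this
    rw [← this]
    refine Finset.prod_congr rfl fun j _ => ?_
    rw [Fintype.sum_bool]
    simp
  rw [swap]
  by_cases hee : ε = ε'
  · subst hee
    rw [Finset.prod_congr rfl fun j _ => by rw [sg_mul_self]]
    simp [Matrix.one_apply]
    norm_num
  · have : ∃ j, ε j ≠ ε' j := by
      by_contra hcon
      push_neg at hcon
      exact hee (funext hcon)
    obtain ⟨j0, hj0⟩ := this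
    rw [Finset.prod_eq_zero (Finset.mem_univ j0)]
    · simp [Matrix.one_apply, hee]
    · revert hj0; cases ε j0 <;> cases ε' j0 <;> simp [sg] <;> norm_num
 
lemma det_MM_eval {m : ℕ} (k : Fin m → ℕ) (α : Fin m → ℚ) {u : ℝ} (hu : 0 < u) :
    (Polynomial.aeval u) ((MM k α).det) = ∏ ε, ff k α ε u := by
  have hleft : ((((2:ℝ) ^ m)⁻¹ • WW' k u)) * WW k u = 1 := by
    rw [Matrix.smul_mul, WW'_mul k hu, smul_smul, inv_mul_cancel₀ (by positivity), one_smul]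
  have hWdet : IsUnit (WW k u).det := Matrix.isUnit_det_of_left_inverse hleft
  have hdet := congrArg Matrix.det (keyB k α hu)
  rw [Matrix.det_mul, Matrix.det_mul, Matrix.det_diagonal] at hdet
  have : ((MM k α).map (Polynomial.aeval u)).det = ∏ ε, ff k α ε u := by
    rw [mul_comm ((WW k u).det)] at hdet
    exact mul_right_cancel₀ hWdet.ne_zero hdet
  rw [← this]
  exact (RingHom.map_det ((Polynomial.aeval u : Polynomial ℚ →ₐ[ℚ] ℝ) :
    Polynomial ℚ →+* ℝ) (MM k α)).trans (by norm_num)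


theorem stmt_5 (a : ℝ) (ha : Transcendental ℚ a)
    (m : ℕ) (k : Fin m → ℕ) (hk : StrictMono k) (α : Fin m → ℚ)
    (h : ∑ j, (α j : ℝ) * Real.sqrt ((k j : ℝ) ^ 2 + a ^ 2) = 0) :
    ∀ j, α j = 0 := by
  have ha2 : Transcendental ℚ (a ^ 2) := ha.pow (by norm_num)
  have ha0 : a ≠ 0 := by
    intro h0
    exact ha (by rw [h0]; exact isAlgebraic_zero)
  have hapos : 0 < a ^ 2 := by positivity
  have hfa : ff k α (fun _ => true) (a ^ 2) = 0 := by
    rw [← h]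
    unfold ff yy
    refine Finset.sum_congr rfl fun j _ => ?_
    simp [sg]
  have hdet0 : (MM k α).det = 0 := by
    by_contra hne
    exact ha2 ⟨(MM k α).det, hne, by
      rw [det_MM_eval k α hapos]
      exact Finset.prod_eq_zero (Finset.mem_univ _) hfa⟩
  have hzero : ∀ u : ℝ, 0 < u → ∃ ε, ff k α ε u = 0 := by
    intro u hu
    have hh := det_MM_eval k α hu
    rw [hdet0, map_zero] at hh
    obtain ⟨ε, _, hε⟩ := Finset.prod_eq_zero_iff.1 hh.symm
    exact ⟨ε, hε⟩
  -- Baire category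
  set Z : (Fin m → Bool) → Set ℝ := fun ε => {v | ff k α ε (1 + v ^ 2) = 0} with hZ
  have hcont : ∀ ε, Continuous fun v : ℝ => ff k α ε (1 + v ^ 2) := by
    intro ε
    unfold ff yy
    refine continuous_finset_sum _ fun j _ => ?_
    exact continuous_const.mul (Real.continuous_sqrt.comp (by continuity))
  have hclosed : ∀ ε, IsClosed (Z ε) := fun ε => isClosed_eq (hcont ε) continuous_const
  have hcover : ⋃ ε, Z ε = Set.univ := by
    ext v
    simp only [Set.mem_iUnion, Set.mem_univ, iff_true]
    obtain ⟨ε, hε⟩ := hzero (1 + v ^ 2) (by positivity)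
    exact ⟨ε, hε⟩
  obtain ⟨ε, hint⟩ := nonempty_interior_of_iUnion_of_closed hclosed hcover
  obtain ⟨v₀, hv₀⟩ := hint
  obtain ⟨δ, hδ, hball⟩ := Metric.isOpen_iff.1 isOpen_interior v₀ hv₀
  set p : ℝ := 1 + |v₀| ^ 2 with hp
  set q : ℝ := 1 + (|v₀| + δ / 2) ^ 2 with hq
  have hppos : 0 < p := by positivity
  have hpq : p < q := by
    rw [hp, hq]
    nlinarith [abs_nonneg v₀, hδ]
  have hvanish : ∀ u ∈ Set.Ioo p q, ff k α ε u = 0 := by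
    intro u hu
    set v := Real.sqrt (u - 1) with hv
    have hu1 : 1 + |v₀| ^ 2 < u := hu.1
    have huq : u < 1 + (|v₀| + δ / 2) ^ 2 := hu.2
    have hum : (0:ℝ) ≤ u - 1 := by nlinarith [abs_nonneg v₀]
    have hvsq : v ^ 2 = u - 1 := Real.sq_sqrt hum
    have hv_lb : |v₀| < v := by
      have h1 : Real.sqrt (|v₀| ^ 2) < Real.sqrt (u - 1) :=
        Real.sqrt_lt_sqrt (by positivity) (by linarith)
      rwa [Real.sqrt_sq (abs_nonneg v₀)] at h1
    have hv_ub : v < |v₀| + δ / 2 := by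
      have h1 : Real.sqrt (u - 1) < Real.sqrt ((|v₀| + δ / 2) ^ 2) :=
        Real.sqrt_lt_sqrt hum (by linarith)
      rwa [Real.sqrt_sq (by positivity)] at h1
    set s := if 0 ≤ v₀ then v else -v with hs
    have hs_ball : s ∈ Metric.ball v₀ δ := by
      rw [Metric.mem_ball, Real.dist_eq, abs_lt]
      rcases le_or_gt 0 v₀ with h0 | h0
      · have habs : |v₀| = v₀ := abs_of_nonneg h0
        rw [hs, if_pos h0]
        constructor <;> linarith
      · have habs : |v₀| = -v₀ := abs_of_neg h0
        rw [hs, if_neg (not_le.2 h0)]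
        constructor <;> linarith
    have hsZ : s ∈ Z ε := interior_subset (hball hs_ball)
    have hsu : 1 + s ^ 2 = u := by
      have : s ^ 2 = v ^ 2 := by
        rw [hs]
        split <;> ring
      rw [this, hvsq]
      ring
    rw [hZ] at hsZ
    simp only [Set.mem_setOf_eq] at hsZ
    rwa [hsu] at hsZ
  have hκinj : Function.Injective fun j => ((k j : ℝ)) ^ 2 := by
    intro i j hij
    simp only at hij
    have h1 : (k i : ℝ) = (k j : ℝ) := by
      nlinarith [Nat.cast_nonneg (α := ℝ) (k i), Nat.cast_nonneg (α := ℝ) (k j)]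
    exact hk.injective (by exact_mod_cast h1)
  have hfin := interval_vanish (fun j => sg (ε j) * (α j : ℝ)) (fun j => ((k j : ℝ)) ^ 2)
    (fun j => by positivity) hκinj p q hppos hpq (by
      intro u hu
      have := hvanish u hu
      unfold ff yy at this
      rw [← this])
  intro j
  have hcj := hfin j
  have : (α j : ℝ) = 0 := (mul_eq_zero.1 hcj).resolve_left (sg_ne_zero _)
  exact_mod_cast this
end Stmt5Aux
end

section
/- Let a, b > 0 and c, d ∈ ℝ. Then there exists ε > 0 such that the sum #{(n, m) ∈ ℤ² : (c + n·a)² + (d + m·b)² ≤ λ²} + #{(n, m) ∈ ℕ² : (n, m) ≠ (0, 0) and (n·a)² + (m·b)² ≤ λ²} equals (5π/(4ab))·λ²·(1 + O(λ^{-ε})) as λ → ∞. -/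
open MeasureTheory Real Set

lemma null_axis1 : volume {p : ℝ × ℝ | p.1 = 0} = 0 := by
  have : {p : ℝ × ℝ | p.1 = 0} = ({0} : Set ℝ) ×ˢ (Set.univ : Set ℝ) := by
    ext ⟨x, y⟩; simp [Set.mem_prod, eq_comm]
  rw [this, Measure.volume_eq_prod, Measure.prod_prod]
  simp

lemma null_axis2 : volume {p : ℝ × ℝ | p.2 = 0} = 0 := by
  have : {p : ℝ × ℝ | p.2 = 0} = (Set.univ : Set ℝ) ×ˢ ({0} : Set ℝ) := by
    ext ⟨x, y⟩; simp [Set.mem_prod, eq_comm]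
  rw [this, Measure.volume_eq_prod, Measure.prod_prod]
  simp

lemma volO_eq (r : ℝ) :
    volume {p : ℝ × ℝ | 0 < p.1 ∧ 0 < p.2 ∧ p.1 ^ 2 + p.2 ^ 2 ≤ r ^ 2}
      = volume {p : ℝ × ℝ | 0 ≤ p.1 ∧ 0 ≤ p.2 ∧ p.1 ^ 2 + p.2 ^ 2 ≤ r ^ 2} := by
  set Q := {p : ℝ × ℝ | 0 ≤ p.1 ∧ 0 ≤ p.2 ∧ p.1 ^ 2 + p.2 ^ 2 ≤ r ^ 2} with hQ
  set O := {p : ℝ × ℝ | 0 < p.1 ∧ 0 < p.2 ∧ p.1 ^ 2 + p.2 ^ 2 ≤ r ^ 2} with hO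
  apply le_antisymm (measure_mono (fun p hp => show p ∈ Q from ⟨hp.1.le, hp.2.1.le, hp.2.2⟩))
  calc volume Q ≤ volume (O ∪ ({p : ℝ × ℝ | p.1 = 0} ∪ {p : ℝ × ℝ | p.2 = 0})) := by
        apply measure_mono
        rintro ⟨x, y⟩ ⟨hx, hy, hr2⟩
        rcases eq_or_lt_of_le hx with h | h
        · exact Or.inr (Or.inl h.symm)
        rcases eq_or_lt_of_le hy with h' | h'
        · exact Or.inr (Or.inr h'.symm)
        · exact Or.inl ⟨h, h', hr2⟩
    _ ≤ volume O + volume ({p : ℝ × ℝ | p.1 = 0} ∪ {p : ℝ × ℝ | p.2 = 0}) := measure_union_le _ _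
    _ ≤ volume O + (volume {p : ℝ × ℝ | p.1 = 0} + volume {p : ℝ × ℝ | p.2 = 0}) :=
        add_le_add le_rfl (measure_union_le _ _)
    _ = volume O := by rw [null_axis1, null_axis2]; simp

lemma ms_disk (r : ℝ) : MeasurableSet {p : ℝ × ℝ | p.1 ^ 2 + p.2 ^ 2 ≤ r ^ 2} := by
  apply measurableSet_le <;> fun_prop

lemma vol_disk (r : ℝ) (hr : 0 ≤ r) :
    volume {p : ℝ × ℝ | p.1 ^ 2 + p.2 ^ 2 ≤ r ^ 2} = ENNReal.ofReal (π * r ^ 2) := by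
  have h := Complex.volume_closedBall 0 r
  have heq : Complex.measurableEquivRealProd ⁻¹' {p : ℝ × ℝ | p.1 ^ 2 + p.2 ^ 2 ≤ r ^ 2}
      = Metric.closedBall (0:ℂ) r := by
    ext z
    simp only [Set.mem_preimage, Complex.measurableEquivRealProd_apply, Set.mem_setOf_eq,
      Metric.mem_closedBall, Complex.dist_eq, sub_zero]
    have h1 : ‖z‖ ^ 2 = z.re ^ 2 + z.im ^ 2 := by
      rw [Complex.sq_norm, Complex.normSq_apply]; ring
    constructor
    · intro h2; nlinarith [norm_nonneg z]
    · intro h2; nlinarith [norm_nonneg z]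
  rw [← Complex.volume_preserving_equiv_real_prod.measure_preimage
    (ms_disk r).nullMeasurableSet, heq, h]
  rw [← ENNReal.ofReal_pow hr, ← NNReal.coe_real_pi, ENNReal.ofReal_coe_nnreal.symm,
    ← ENNReal.ofReal_mul (by positivity)]
  rw [ENNReal.ofReal_eq_ofReal_iff (by positivity) (by positivity)]
  ring


lemma mp_flip1 : MeasurePreserving (fun p : ℝ × ℝ => (-p.1, p.2)) volume volume := by
  rw [Measure.volume_eq_prod]
  exact (Measure.measurePreserving_neg (volume : Measure ℝ)).prod (MeasurePreserving.id _)

lemma mp_flip2 : MeasurePreserving (fun p : ℝ × ℝ => (p.1, -p.2)) volume volume := by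
  rw [Measure.volume_eq_prod]
  exact (MeasurePreserving.id _).prod (Measure.measurePreserving_neg (volume : Measure ℝ))

-- quarter disk volume
lemma vol_quarter (r : ℝ) (hr : 0 ≤ r) :
    volume {p : ℝ × ℝ | 0 ≤ p.1 ∧ 0 ≤ p.2 ∧ p.1 ^ 2 + p.2 ^ 2 ≤ r ^ 2}
      = ENNReal.ofReal (π * r ^ 2 / 4) := by
  set Q := {p : ℝ × ℝ | 0 ≤ p.1 ∧ 0 ≤ p.2 ∧ p.1 ^ 2 + p.2 ^ 2 ≤ r ^ 2} with hQ
  have msQ : MeasurableSet Q := by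
    have : Q = {p : ℝ × ℝ | 0 ≤ p.1} ∩ ({p : ℝ × ℝ | 0 ≤ p.2} ∩ {p : ℝ × ℝ | p.1 ^ 2 + p.2 ^ 2 ≤ r ^ 2}) := rfl
    rw [this]
    refine (measurableSet_le measurable_const measurable_fst).inter
      ((measurableSet_le measurable_const measurable_snd).inter ?_)
    apply measurableSet_le <;> fun_prop
  -- volumes of the four reflected quadrants are equal
  have h2 : volume ((fun p : ℝ × ℝ => (-p.1, p.2)) ⁻¹' Q) = volume Q :=
    mp_flip1.measure_preimage msQ.nullMeasurableSet
  have h3 : volume ((fun p : ℝ × ℝ => (p.1, -p.2)) ⁻¹' Q) = volume Q :=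
    mp_flip2.measure_preimage msQ.nullMeasurableSet
  have h4 : volume ((fun p : ℝ × ℝ => (-p.1, -p.2)) ⁻¹' Q) = volume Q := by
    have : (fun p : ℝ × ℝ => (-p.1, -p.2)) = (fun p : ℝ × ℝ => (-p.1, p.2)) ∘
        (fun p : ℝ × ℝ => (p.1, -p.2)) := rfl
    rw [this, Set.preimage_comp]
    rw [mp_flip2.measure_preimage (by
      exact (mp_flip1.measurable (msQ : MeasurableSet Q)).nullMeasurableSet ), h2]
  -- open quadrant
  set O := {p : ℝ × ℝ | 0 < p.1 ∧ 0 < p.2 ∧ p.1 ^ 2 + p.2 ^ 2 ≤ r ^ 2} with hO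
  have msO : MeasurableSet O := by
    have : O = {p : ℝ × ℝ | 0 < p.1} ∩ ({p : ℝ × ℝ | 0 < p.2} ∩ {p : ℝ × ℝ | p.1 ^ 2 + p.2 ^ 2 ≤ r ^ 2}) := rfl
    rw [this]
    refine (measurableSet_lt measurable_const measurable_fst).inter
      ((measurableSet_lt measurable_const measurable_snd).inter ?_)
    apply measurableSet_le <;> fun_prop
  have hOQ : volume O = volume Q := volO_eq r
  -- the four open quadrants, with equal volume
  have hO2 : volume ((fun p : ℝ × ℝ => (-p.1, p.2)) ⁻¹' O) = volume O :=
    mp_flip1.measure_preimage msO.nullMeasurableSet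
  have hO3 : volume ((fun p : ℝ × ℝ => (p.1, -p.2)) ⁻¹' O) = volume O :=
    mp_flip2.measure_preimage msO.nullMeasurableSet
  have hO4 : volume ((fun p : ℝ × ℝ => (-p.1, -p.2)) ⁻¹' O) = volume O := by
    have : (fun p : ℝ × ℝ => (-p.1, -p.2)) = (fun p : ℝ × ℝ => (-p.1, p.2)) ∘
        (fun p : ℝ × ℝ => (p.1, -p.2)) := rfl
    rw [this, Set.preimage_comp,
      mp_flip2.measure_preimage (mp_flip1.measurable msO).nullMeasurableSet, hO2]
  set O2 := (fun p : ℝ × ℝ => (-p.1, p.2)) ⁻¹' O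
  set O3 := (fun p : ℝ × ℝ => (p.1, -p.2)) ⁻¹' O
  set O4 := (fun p : ℝ × ℝ => (-p.1, -p.2)) ⁻¹' O
  have msO2 : MeasurableSet O2 := mp_flip1.measurable msO
  have msO3 : MeasurableSet O3 := mp_flip2.measurable msO
  have msO4 : MeasurableSet O4 := by
    have : (fun p : ℝ × ℝ => (-p.1, -p.2)) = (fun p : ℝ × ℝ => (-p.1, p.2)) ∘
        (fun p : ℝ × ℝ => (p.1, -p.2)) := rfl
    have := mp_flip2.measurable (mp_flip1.measurable msO)
    exact this
  have hmemO2 : ∀ p : ℝ × ℝ, p ∈ O2 → p.1 < 0 ∧ 0 < p.2 := by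
    rintro ⟨x, y⟩ hp
    simp only [O2, Set.mem_preimage, hO, Set.mem_setOf_eq] at hp
    exact ⟨by simpa using hp.1, hp.2.1⟩
  have hmemO3 : ∀ p : ℝ × ℝ, p ∈ O3 → 0 < p.1 ∧ p.2 < 0 := by
    rintro ⟨x, y⟩ hp
    simp only [O3, Set.mem_preimage, hO, Set.mem_setOf_eq] at hp
    exact ⟨hp.1, by simpa using hp.2.1⟩
  have hmemO4 : ∀ p : ℝ × ℝ, p ∈ O4 → p.1 < 0 ∧ p.2 < 0 := by
    rintro ⟨x, y⟩ hp
    simp only [O4, Set.mem_preimage, hO, Set.mem_setOf_eq] at hp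
    exact ⟨by simpa using hp.1, by simpa using hp.2.1⟩
  set D := {p : ℝ × ℝ | p.1 ^ 2 + p.2 ^ 2 ≤ r ^ 2} with hD
  -- lower bound : 4 * volume Q ≤ volume D
  have hsubD : O ∪ (O2 ∪ (O3 ∪ O4)) ⊆ D := by
    rintro ⟨x, y⟩ hp
    rcases hp with h | h | h | h
    · exact h.2.2
    all_goals {
      simp only [O2, O3, O4, Set.mem_preimage, hO, Set.mem_setOf_eq] at h
      show (x, y).1 ^ 2 + (x, y).2 ^ 2 ≤ r ^ 2
      have := h.2.2
      nlinarith [this] }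
  have hdisj : volume (O ∪ (O2 ∪ (O3 ∪ O4))) = volume O + (volume O2 + (volume O3 + volume O4)) := by
    rw [measure_union ?d1 (msO2.union (msO3.union msO4)),
      measure_union ?d2 (msO3.union msO4), measure_union ?d3 msO4]
    case d3 =>
      rw [Set.disjoint_left]; intro p hp hp'
      exact absurd (hmemO4 p hp').1 (not_lt.mpr (hmemO3 p hp).1.le)
    case d2 =>
      rw [Set.disjoint_left]; rintro p hp hp'
      rcases hp' with h' | h'
      · exact absurd (hmemO2 p hp).1 (not_lt.mpr (hmemO3 p h').1.le)
      · exact absurd (hmemO2 p hp).2 (not_lt.mpr (hmemO4 p h').2.le)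
    case d1 =>
      rw [Set.disjoint_left]; rintro p hp hp'
      rcases hp' with h' | h' | h'
      · exact absurd hp.1 (not_lt.mpr (hmemO2 p h').1.le)
      · exact absurd hp.2.1 (not_lt.mpr (hmemO3 p h').2.le)
      · exact absurd hp.1 (not_lt.mpr (hmemO4 p h').1.le)
  have hlow : 4 * volume Q ≤ volume D := by
    calc 4 * volume Q = volume O + (volume O2 + (volume O3 + volume O4)) := by
          rw [hO2, hO3, hO4, hOQ]; ring
      _ = volume (O ∪ (O2 ∪ (O3 ∪ O4))) := hdisj.symm
      _ ≤ volume D := measure_mono hsubD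
  -- upper bound
  have hup : volume D ≤ 4 * volume Q := by
    have hcov : D ⊆ Q ∪ ((fun p : ℝ × ℝ => (-p.1, p.2)) ⁻¹' Q ∪
        ((fun p : ℝ × ℝ => (p.1, -p.2)) ⁻¹' Q ∪ (fun p : ℝ × ℝ => (-p.1, -p.2)) ⁻¹' Q)) := by
      rintro ⟨x, y⟩ hp
      simp only [hD, Set.mem_setOf_eq] at hp
      rcases le_or_gt 0 x with hx | hx <;> rcases le_or_gt 0 y with hy | hy
      · exact Or.inl ⟨hx, hy, hp⟩
      · exact Or.inr (Or.inr (Or.inl ⟨hx, by simpa using hy.le, by simpa using hp⟩))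
      · exact Or.inr (Or.inl ⟨by simpa using hx.le, hy, by simpa using hp⟩)
      · exact Or.inr (Or.inr (Or.inr ⟨by simpa using hx.le, by simpa using hy.le, by simpa using hp⟩))
    calc volume D ≤ volume Q + (volume ((fun p : ℝ × ℝ => (-p.1, p.2)) ⁻¹' Q) +
          (volume ((fun p : ℝ × ℝ => (p.1, -p.2)) ⁻¹' Q) +
            volume ((fun p : ℝ × ℝ => (-p.1, -p.2)) ⁻¹' Q))) := by
          refine le_trans (measure_mono hcov) ?_
          refine le_trans (measure_union_le _ _) (add_le_add le_rfl ?_)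
          refine le_trans (measure_union_le _ _) (add_le_add le_rfl ?_)
          exact measure_union_le _ _
      _ = 4 * volume Q := by rw [h2, h3, h4]; ring
  have hDvol : volume D = ENNReal.ofReal (π * r ^ 2) := vol_disk r hr
  have h4Q : 4 * volume Q = ENNReal.ofReal (π * r ^ 2) := le_antisymm (hDvol ▸ hlow) (hDvol ▸ hup)
  have : volume Q = ENNReal.ofReal (π * r ^ 2) / 4 :=
    (ENNReal.eq_div_iff (by norm_num) (by norm_num)).mpr h4Q
  rw [this]
  rw [show (π * r ^ 2 / 4) = (π * r ^ 2) / (4:ℝ) by ring,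
    ENNReal.ofReal_div_of_pos (by norm_num)]
  norm_num


lemma mem_ioc_iff_ceil {a : ℝ} (ha : 0 < a) (c x : ℝ) (n : ℤ) :
    x ∈ Set.Ioc (c + n * a - a) (c + n * a) ↔ n = ⌈(x - c) / a⌉ := by
  rw [eq_comm, Int.ceil_eq_iff]
  constructor
  · rintro ⟨h1, h2⟩
    constructor
    · rw [lt_div_iff₀ ha]; nlinarith
    · rw [div_le_iff₀ ha]; nlinarith
  · rintro ⟨h1, h2⟩
    rw [lt_div_iff₀ ha] at h1
    rw [div_le_iff₀ ha] at h2
    constructor <;> [nlinarith; nlinarith]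

lemma vol_box (a b : ℝ) (u v : ℝ) :
    volume (Set.Ioc (u - a) u ×ˢ Set.Ioc (v - b) v) = ENNReal.ofReal a * ENNReal.ofReal b := by
  rw [Measure.volume_eq_prod, Measure.prod_prod, Real.volume_Ioc, Real.volume_Ioc]
  norm_num


lemma sandwich_arith (a b lam N : ℝ) (ha : 0 < a) (hb : 0 < b) (hlam : a + b ≤ lam)
    (k1 : π * (lam - (a+b)) ^ 2 ≤ N * (a * b)) (k2 : N * (a * b) ≤ π * (lam + (a+b)) ^ 2) :
    |N - π / (a * b) * lam ^ 2| ≤ 3 * π * (a + b) / (a * b) * lam := by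
  have hD0 : 0 < a + b := by linarith
  have hab : (0:ℝ) < a * b := mul_pos ha hb
  have e : N - π / (a * b) * lam ^ 2 = (N * (a * b) - π * lam ^ 2) / (a * b) := by
    field_simp
  rw [abs_le, e]
  constructor
  · rw [show -(3 * π * (a + b) / (a * b) * lam) = (-(3 * π * (a+b) * lam)) / (a * b) by ring,
      div_le_div_iff_of_pos_right hab]
    nlinarith [pi_pos, mul_pos hD0 (lt_of_lt_of_le hD0 hlam), k1]
  · rw [show (3 * π * (a + b) / (a * b) * lam) = (3 * π * (a+b) * lam) / (a * b) by ring,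
      div_le_div_iff_of_pos_right hab]
    nlinarith [pi_pos, mul_pos hD0 (lt_of_lt_of_le hD0 hlam), k2]


set_option maxHeartbeats 2000000 in
lemma count_full (a b : ℝ) (ha : 0 < a) (hb : 0 < b) (c d : ℝ) (lam : ℝ) (hlam : a + b ≤ lam) :
    {p : ℤ × ℤ | (c + (p.1 : ℝ) * a) ^ 2 + (d + (p.2 : ℝ) * b) ^ 2 ≤ lam ^ 2}.Finite ∧
    |({p : ℤ × ℤ | (c + (p.1 : ℝ) * a) ^ 2 + (d + (p.2 : ℝ) * b) ^ 2 ≤ lam ^ 2}.ncard : ℝ)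
      - π / (a * b) * lam ^ 2| ≤ 3 * π * (a + b) / (a * b) * lam := by
  have hD0 : 0 < a + b := by linarith
  have hlam0 : (0:ℝ) ≤ lam := le_trans hD0.le hlam
  set S := {p : ℤ × ℤ | (c + (p.1 : ℝ) * a) ^ 2 + (d + (p.2 : ℝ) * b) ^ 2 ≤ lam ^ 2} with hS
  -- bounds on members
  have key : ∀ p ∈ S, |c + (p.1:ℝ) * a| ≤ lam ∧ |d + (p.2:ℝ) * b| ≤ lam := by
    intro p hp
    have hp' : (c + (p.1 : ℝ) * a) ^ 2 + (d + (p.2 : ℝ) * b) ^ 2 ≤ lam ^ 2 := hp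
    have hsq1 : (c + (p.1:ℝ) * a) ^ 2 ≤ lam ^ 2 := by nlinarith [sq_nonneg (d + (p.2:ℝ)*b)]
    have hsq2 : (d + (p.2:ℝ) * b) ^ 2 ≤ lam ^ 2 := by nlinarith [sq_nonneg (c + (p.1:ℝ)*a)]
    exact ⟨abs_le.mpr (abs_le_of_sq_le_sq' hsq1 hlam0), abs_le.mpr (abs_le_of_sq_le_sq' hsq2 hlam0)⟩
  -- finiteness
  have hfin : S.Finite := by
    set K1 : ℤ := ⌈(lam + |c|) / a⌉
    set K2 : ℤ := ⌈(lam + |d|) / b⌉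
    apply Set.Finite.subset ((Set.finite_Icc (-K1) K1).prod (Set.finite_Icc (-K2) K2))
    intro p hp
    obtain ⟨h1, h2⟩ := key p hp
    rw [abs_le] at h1 h2
    have hr1 : (p.1:ℝ) ≤ (K1:ℝ) := by
      refine le_trans ?_ (Int.le_ceil _)
      rw [le_div_iff₀ ha]
      nlinarith [le_abs_self c, neg_abs_le c]
    have hr1' : -(K1:ℝ) ≤ (p.1:ℝ) := by
      rw [neg_le]
      refine le_trans ?_ (Int.le_ceil _)
      rw [le_div_iff₀ ha]
      nlinarith [le_abs_self c, neg_abs_le c]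
    have hr2 : (p.2:ℝ) ≤ (K2:ℝ) := by
      refine le_trans ?_ (Int.le_ceil _)
      rw [le_div_iff₀ hb]
      nlinarith [le_abs_self d, neg_abs_le d]
    have hr2' : -(K2:ℝ) ≤ (p.2:ℝ) := by
      rw [neg_le]
      refine le_trans ?_ (Int.le_ceil _)
      rw [le_div_iff₀ hb]
      nlinarith [le_abs_self d, neg_abs_le d]
    refine ⟨Set.mem_Icc.mpr ⟨?_, ?_⟩, Set.mem_Icc.mpr ⟨?_, ?_⟩⟩
    · exact_mod_cast hr1'
    · exact_mod_cast hr1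
    · exact_mod_cast hr2'
    · exact_mod_cast hr2
  refine ⟨hfin, ?_⟩
  set F := hfin.toFinset with hF
  -- the boxes
  set B : ℤ × ℤ → Set (ℝ × ℝ) := fun p =>
    Set.Ioc (c + (p.1:ℝ) * a - a) (c + (p.1:ℝ) * a) ×ˢ
      Set.Ioc (d + (p.2:ℝ) * b - b) (d + (p.2:ℝ) * b) with hB
  have msB : ∀ p : ℤ × ℤ, MeasurableSet (B p) := fun p =>
    measurableSet_Ioc.prod measurableSet_Ioc
  have hdisj : (↑F : Set (ℤ × ℤ)).PairwiseDisjoint B := by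
    intro p _ q _ hpq
    simp only [Function.onFun]
    rw [Set.disjoint_left]
    rintro ⟨x, y⟩ hzp hzq
    apply hpq
    obtain ⟨hx, hy⟩ := hzp
    obtain ⟨hx', hy'⟩ := hzq
    have e1 : p.1 = q.1 := by
      rw [(mem_ioc_iff_ceil ha c x p.1).mp hx, (mem_ioc_iff_ceil ha c x q.1).mp hx']
    have e2 : p.2 = q.2 := by
      rw [(mem_ioc_iff_ceil hb d y p.2).mp hy, (mem_ioc_iff_ceil hb d y q.2).mp hy']
    exact Prod.ext e1 e2
  -- volume of the union
  have hvolU : volume (⋃ p ∈ F, B p) = (F.card : ENNReal) * ENNReal.ofReal (a * b) := by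
    rw [measure_biUnion_finset hdisj (fun p _ => msB p)]
    calc ∑ p ∈ F, volume (B p) = ∑ _p ∈ F, (ENNReal.ofReal a * ENNReal.ofReal b) :=
          Finset.sum_congr rfl (fun p _ => vol_box a b _ _)
      _ = (F.card : ENNReal) * ENNReal.ofReal (a * b) := by
          rw [Finset.sum_const, nsmul_eq_mul, ENNReal.ofReal_mul ha.le]
  -- upper inclusion
  have hup : (⋃ p ∈ F, B p) ⊆ {z : ℝ × ℝ | z.1 ^ 2 + z.2 ^ 2 ≤ (lam + (a + b)) ^ 2} := by
    intro z hz
    simp only [Set.mem_iUnion, exists_prop] at hz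
    obtain ⟨p, hpF, hzB⟩ := hz
    have hpS : p ∈ S := hfin.mem_toFinset.mp hpF
    obtain ⟨h1, h2⟩ := key p hpS
    obtain ⟨hx, hy⟩ := hzB
    simp only [Set.mem_Ioc] at hx hy
    show z.1 ^ 2 + z.2 ^ 2 ≤ (lam + (a + b)) ^ 2
    have hpS' : (c + (p.1 : ℝ) * a) ^ 2 + (d + (p.2 : ℝ) * b) ^ 2 ≤ lam ^ 2 := hpS
    set u := c + (p.1:ℝ) * a
    set v := d + (p.2:ℝ) * b
    have habs1 : |z.1 - u| ≤ a := by rw [abs_le]; constructor <;> [linarith [hx.2]; linarith [hx.1]]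
    have habs2 : |z.2 - v| ≤ b := by rw [abs_le]; constructor <;> [linarith [hy.2]; linarith [hy.1]]
    have t1 : u * (z.1 - u) ≤ lam * a := le_trans (le_abs_self _)
      (by rw [abs_mul]; exact mul_le_mul h1 habs1 (abs_nonneg _) hlam0)
    have t2 : v * (z.2 - v) ≤ lam * b := le_trans (le_abs_self _)
      (by rw [abs_mul]; exact mul_le_mul h2 habs2 (abs_nonneg _) hlam0)
    have t3 : (z.1 - u) ^ 2 ≤ a ^ 2 := by
      rw [← sq_abs]; exact pow_le_pow_left₀ (abs_nonneg _) habs1 2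
    have t4 : (z.2 - v) ^ 2 ≤ b ^ 2 := by
      rw [← sq_abs]; exact pow_le_pow_left₀ (abs_nonneg _) habs2 2
    nlinarith [t1, t2, t3, t4, hpS', mul_pos ha hb]
  -- lower inclusion
  have hlow : {z : ℝ × ℝ | z.1 ^ 2 + z.2 ^ 2 ≤ (lam - (a + b)) ^ 2} ⊆ ⋃ p ∈ F, B p := by
    intro z hz
    have hz' : z.1 ^ 2 + z.2 ^ 2 ≤ (lam - (a+b)) ^ 2 := hz
    set n : ℤ := ⌈(z.1 - c) / a⌉
    set m : ℤ := ⌈(z.2 - d) / b⌉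
    have hxmem : z.1 ∈ Set.Ioc (c + (n:ℝ) * a - a) (c + (n:ℝ) * a) :=
      (mem_ioc_iff_ceil ha c z.1 n).mpr rfl
    have hymem : z.2 ∈ Set.Ioc (d + (m:ℝ) * b - b) (d + (m:ℝ) * b) :=
      (mem_ioc_iff_ceil hb d z.2 m).mpr rfl
    have hsq1 : z.1 ^ 2 ≤ (lam - (a+b)) ^ 2 := by nlinarith [sq_nonneg z.2]
    have hsq2 : z.2 ^ 2 ≤ (lam - (a+b)) ^ 2 := by nlinarith [sq_nonneg z.1]
    have hz1 : |z.1| ≤ lam - (a+b) ∧ |z.2| ≤ lam - (a+b) :=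
      ⟨abs_le.mpr (abs_le_of_sq_le_sq' hsq1 (by linarith)),
       abs_le.mpr (abs_le_of_sq_le_sq' hsq2 (by linarith))⟩
    have hmemS : (n, m) ∈ S := by
      show (c + (n:ℝ) * a) ^ 2 + (d + (m:ℝ) * b) ^ 2 ≤ lam ^ 2
      obtain ⟨hu1, hu2⟩ := hxmem
      obtain ⟨hv1, hv2⟩ := hymem
      obtain ⟨hza, hzb⟩ := hz1
      set u := c + (n:ℝ) * a
      set v := d + (m:ℝ) * b
      have habs1 : |u - z.1| ≤ a := by rw [abs_le]; constructor <;> [linarith; linarith]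
      have habs2 : |v - z.2| ≤ b := by rw [abs_le]; constructor <;> [linarith; linarith]
      have t1 : z.1 * (u - z.1) ≤ (lam - (a+b)) * a := le_trans (le_abs_self _)
        (by rw [abs_mul]; exact mul_le_mul hza habs1 (abs_nonneg _) (by linarith [abs_nonneg z.1]))
      have t2 : z.2 * (v - z.2) ≤ (lam - (a+b)) * b := le_trans (le_abs_self _)
        (by rw [abs_mul]; exact mul_le_mul hzb habs2 (abs_nonneg _) (by linarith [abs_nonneg z.2]))
      have t3 : (u - z.1) ^ 2 ≤ a ^ 2 := by
        rw [← sq_abs]; exact pow_le_pow_left₀ (abs_nonneg _) habs1 2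
      have t4 : (v - z.2) ^ 2 ≤ b ^ 2 := by
        rw [← sq_abs]; exact pow_le_pow_left₀ (abs_nonneg _) habs2 2
      nlinarith [t1, t2, t3, t4, hz', mul_pos ha hb]
    refine Set.mem_biUnion (hfin.mem_toFinset.mpr hmemS) ?_
    exact ⟨hxmem, hymem⟩
  -- sandwich
  have hub : (F.card : ENNReal) * ENNReal.ofReal (a * b) ≤ ENNReal.ofReal (π * (lam + (a+b)) ^ 2) := by
    rw [← hvolU, ← vol_disk _ (by linarith)]
    exact measure_mono hup
  have hlb : ENNReal.ofReal (π * (lam - (a+b)) ^ 2) ≤ (F.card : ENNReal) * ENNReal.ofReal (a * b) := by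
    rw [← hvolU, ← vol_disk _ (by linarith)]
    exact measure_mono hlow
  -- to real inequalities
  have hcast : (F.card : ENNReal) * ENNReal.ofReal (a * b) = ENNReal.ofReal ((F.card : ℝ) * (a * b)) := by
    rw [← ENNReal.ofReal_natCast F.card, ← ENNReal.ofReal_mul (Nat.cast_nonneg _)]
  rw [hcast] at hub hlb
  have key2 : (F.card : ℝ) * (a * b) ≤ π * (lam + (a+b)) ^ 2 :=
    (ENNReal.ofReal_le_ofReal_iff (by positivity)).mp hub
  have key1 : π * (lam - (a+b)) ^ 2 ≤ (F.card : ℝ) * (a * b) :=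
    (ENNReal.ofReal_le_ofReal_iff (mul_nonneg (Nat.cast_nonneg _) (mul_pos ha hb).le)).mp hlb
  -- final arithmetic
  have hncard : (S.ncard : ℝ) = (F.card : ℝ) := by
    rw [Set.ncard_eq_toFinset_card S hfin]
  rw [hncard]
  exact sandwich_arith a b lam _ ha hb hlam key1 key2

lemma mem_ioc_iff_ceil0 {a : ℝ} (ha : 0 < a) (x : ℝ) (n : ℤ) :
    x ∈ Set.Ioc ((n:ℝ) * a - a) ((n:ℝ) * a) ↔ n = ⌈x / a⌉ := by
  simpa using mem_ioc_iff_ceil ha 0 x n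


lemma vol_quarter_open (r : ℝ) (hr : 0 ≤ r) :
    volume {p : ℝ × ℝ | 0 < p.1 ∧ 0 < p.2 ∧ p.1 ^ 2 + p.2 ^ 2 ≤ r ^ 2}
      = ENNReal.ofReal (π * r ^ 2 / 4) := (volO_eq r).trans (vol_quarter r hr)

lemma sandwich_arith_q (a b lam N : ℝ) (ha : 0 < a) (hb : 0 < b) (hlam : a + b ≤ lam)
    (k1 : π * (lam - (a+b)) ^ 2 / 4 ≤ N * (a * b))
    (k2 : N * (a * b) ≤ π * (lam + (a+b)) ^ 2 / 4 + (a * (2 * (lam + (a+b))) + b * (2 * (lam + (a+b))))) :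
    |N - π / (4 * (a * b)) * lam ^ 2| ≤ (3 * π * (a + b) / 4 + 8 * (a + b)) / (a * b) * lam := by
  have hD0 : 0 < a + b := by linarith
  have hab : (0:ℝ) < a * b := mul_pos ha hb
  have e : N - π / (4 * (a * b)) * lam ^ 2 = (N * (a * b) - π / 4 * lam ^ 2) / (a * b) := by
    field_simp
  rw [abs_le, e]
  have hDlam : 0 < (a + b) * lam := mul_pos hD0 (lt_of_lt_of_le hD0 hlam)
  constructor
  · rw [show -((3 * π * (a + b) / 4 + 8 * (a + b)) / (a * b) * lam)
        = (-((3 * π * (a+b) / 4 + 8 * (a+b)) * lam)) / (a * b) by ring,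
      div_le_div_iff_of_pos_right hab]
    nlinarith [pi_pos, hDlam, k1, mul_pos pi_pos hDlam,
      mul_nonneg pi_pos.le (sq_nonneg (a+b))]
  · rw [show ((3 * π * (a + b) / 4 + 8 * (a + b)) / (a * b) * lam)
        = ((3 * π * (a+b) / 4 + 8 * (a+b)) * lam) / (a * b) by ring,
      div_le_div_iff_of_pos_right hab]
    nlinarith [pi_pos, hDlam, k2, mul_pos pi_pos hDlam,
      mul_nonneg (mul_nonneg pi_pos.le hD0.le) (by linarith : (0:ℝ) ≤ lam - (a+b)),
      mul_nonneg hD0.le (by linarith : (0:ℝ) ≤ lam - (a+b))]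

set_option maxHeartbeats 2000000 in
lemma count_quarter (a b : ℝ) (ha : 0 < a) (hb : 0 < b) (lam : ℝ) (hlam : a + b ≤ lam) :
    {p : ℕ × ℕ | p ≠ (0, 0) ∧ ((p.1 : ℝ) * a) ^ 2 + ((p.2 : ℝ) * b) ^ 2 ≤ lam ^ 2}.Finite ∧
    |({p : ℕ × ℕ | p ≠ (0, 0) ∧ ((p.1 : ℝ) * a) ^ 2 + ((p.2 : ℝ) * b) ^ 2 ≤ lam ^ 2}.ncard : ℝ)
      - π / (4 * (a * b)) * lam ^ 2| ≤ (3 * π * (a + b) / 4 + 8 * (a + b)) / (a * b) * lam := by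
  have hD0 : 0 < a + b := by linarith
  have hlam0 : (0:ℝ) ≤ lam := le_trans hD0.le hlam
  set S := {p : ℕ × ℕ | p ≠ (0, 0) ∧ ((p.1 : ℝ) * a) ^ 2 + ((p.2 : ℝ) * b) ^ 2 ≤ lam ^ 2} with hS
  have key : ∀ p ∈ S, (p.1 : ℝ) * a ≤ lam ∧ (p.2 : ℝ) * b ≤ lam := by
    intro p hp
    obtain ⟨-, hp'⟩ := hp
    have hsq1 : ((p.1:ℝ) * a) ^ 2 ≤ lam ^ 2 := by nlinarith [sq_nonneg ((p.2:ℝ)*b)]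
    have hsq2 : ((p.2:ℝ) * b) ^ 2 ≤ lam ^ 2 := by nlinarith [sq_nonneg ((p.1:ℝ)*a)]
    exact ⟨(abs_le_of_sq_le_sq' hsq1 hlam0).2, (abs_le_of_sq_le_sq' hsq2 hlam0).2⟩
  have hfin : S.Finite := by
    set K1 : ℕ := ⌈lam / a⌉₊
    set K2 : ℕ := ⌈lam / b⌉₊
    apply Set.Finite.subset ((Set.finite_Icc (0:ℕ) K1).prod (Set.finite_Icc (0:ℕ) K2))
    intro p hp
    obtain ⟨h1, h2⟩ := key p hp
    have hr1 : (p.1:ℝ) ≤ (K1:ℝ) := by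
      refine le_trans ?_ (Nat.le_ceil _)
      rw [le_div_iff₀ ha]; exact h1
    have hr2 : (p.2:ℝ) ≤ (K2:ℝ) := by
      refine le_trans ?_ (Nat.le_ceil _)
      rw [le_div_iff₀ hb]; exact h2
    exact ⟨Set.mem_Icc.mpr ⟨Nat.zero_le _, by exact_mod_cast hr1⟩,
      Set.mem_Icc.mpr ⟨Nat.zero_le _, by exact_mod_cast hr2⟩⟩
  refine ⟨hfin, ?_⟩
  set F := hfin.toFinset with hF
  set B : ℕ × ℕ → Set (ℝ × ℝ) := fun p =>
    Set.Ioc ((p.1:ℝ) * a - a) ((p.1:ℝ) * a) ×ˢ Set.Ioc ((p.2:ℝ) * b - b) ((p.2:ℝ) * b) with hB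
  have msB : ∀ p : ℕ × ℕ, MeasurableSet (B p) := fun p =>
    measurableSet_Ioc.prod measurableSet_Ioc
  have hdisj : (↑F : Set (ℕ × ℕ)).PairwiseDisjoint B := by
    intro p _ q _ hpq
    simp only [Function.onFun]
    rw [Set.disjoint_left]
    rintro ⟨x, y⟩ hzp hzq
    apply hpq
    obtain ⟨hx, hy⟩ := hzp
    obtain ⟨hx', hy'⟩ := hzq
    have c1 : ((p.1:ℤ):ℝ) = (p.1:ℝ) := by push_cast; rfl
    have e1 : (p.1:ℤ) = (q.1:ℤ) := by
      rw [(mem_ioc_iff_ceil0 ha x (p.1:ℤ)).mp (by push_cast; exact hx),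
        (mem_ioc_iff_ceil0 ha x (q.1:ℤ)).mp (by push_cast; exact hx')]
    have e2 : (p.2:ℤ) = (q.2:ℤ) := by
      rw [(mem_ioc_iff_ceil0 hb y (p.2:ℤ)).mp (by push_cast; exact hy),
        (mem_ioc_iff_ceil0 hb y (q.2:ℤ)).mp (by push_cast; exact hy')]
    exact Prod.ext (by exact_mod_cast e1) (by exact_mod_cast e2)
  have hvolU : volume (⋃ p ∈ F, B p) = (F.card : ENNReal) * ENNReal.ofReal (a * b) := by
    rw [measure_biUnion_finset hdisj (fun p _ => msB p)]
    calc ∑ p ∈ F, volume (B p) = ∑ _p ∈ F, (ENNReal.ofReal a * ENNReal.ofReal b) :=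
          Finset.sum_congr rfl (fun p _ => vol_box a b _ _)
      _ = (F.card : ENNReal) * ENNReal.ofReal (a * b) := by
          rw [Finset.sum_const, nsmul_eq_mul, ENNReal.ofReal_mul ha.le]
  -- upper inclusion
  set Qc := {z : ℝ × ℝ | 0 ≤ z.1 ∧ 0 ≤ z.2 ∧ z.1 ^ 2 + z.2 ^ 2 ≤ (lam + (a + b)) ^ 2} with hQc
  set St1 := Set.Ioc (-a) (0:ℝ) ×ˢ Set.Icc (-(lam + (a+b))) (lam + (a+b)) with hSt1
  set St2 := Set.Icc (-(lam + (a+b))) (lam + (a+b)) ×ˢ Set.Ioc (-b) (0:ℝ) with hSt2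
  have hup : (⋃ p ∈ F, B p) ⊆ Qc ∪ (St1 ∪ St2) := by
    intro z hz
    simp only [Set.mem_iUnion, exists_prop] at hz
    obtain ⟨p, hpF, hzB⟩ := hz
    have hpS : p ∈ S := hfin.mem_toFinset.mp hpF
    obtain ⟨h1, h2⟩ := key p hpS
    obtain ⟨hx, hy⟩ := hzB
    simp only [Set.mem_Ioc] at hx hy
    have hp1 : (0:ℝ) ≤ (p.1:ℝ) * a := mul_nonneg (Nat.cast_nonneg _) ha.le
    have hp2 : (0:ℝ) ≤ (p.2:ℝ) * b := mul_nonneg (Nat.cast_nonneg _) hb.le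
    have habs1 : |z.1 - (p.1:ℝ) * a| ≤ a := by
      rw [abs_le]; exact ⟨by linarith [hx.2], by linarith [hx.1]⟩
    have habs2 : |z.2 - (p.2:ℝ) * b| ≤ b := by
      rw [abs_le]; exact ⟨by linarith [hy.2], by linarith [hy.1]⟩
    have hu : |(p.1:ℝ) * a| ≤ lam := abs_le.mpr ⟨by linarith, h1⟩
    have hv : |(p.2:ℝ) * b| ≤ lam := abs_le.mpr ⟨by linarith, h2⟩
    have t1 : ((p.1:ℝ) * a) * (z.1 - (p.1:ℝ) * a) ≤ lam * a := le_trans (le_abs_self _)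
      (by rw [abs_mul]; exact mul_le_mul hu habs1 (abs_nonneg _) hlam0)
    have t2 : ((p.2:ℝ) * b) * (z.2 - (p.2:ℝ) * b) ≤ lam * b := le_trans (le_abs_self _)
      (by rw [abs_mul]; exact mul_le_mul hv habs2 (abs_nonneg _) hlam0)
    have t3 : (z.1 - (p.1:ℝ) * a) ^ 2 ≤ a ^ 2 := by
      rw [← sq_abs]; exact pow_le_pow_left₀ (abs_nonneg _) habs1 2
    have t4 : (z.2 - (p.2:ℝ) * b) ^ 2 ≤ b ^ 2 := by
      rw [← sq_abs]; exact pow_le_pow_left₀ (abs_nonneg _) habs2 2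
    have hcond : ((p.1:ℝ) * a) ^ 2 + ((p.2:ℝ) * b) ^ 2 ≤ lam ^ 2 := hpS.2
    have hd : z.1 ^ 2 + z.2 ^ 2 ≤ (lam + (a + b)) ^ 2 := by
      nlinarith [t1, t2, t3, t4, hcond, mul_pos ha hb]
    have hzb1 : |z.1| ≤ lam + (a+b) := abs_le.mpr
      (abs_le_of_sq_le_sq' (by nlinarith [sq_nonneg z.2]) (by linarith))
    have hzb2 : |z.2| ≤ lam + (a+b) := abs_le.mpr
      (abs_le_of_sq_le_sq' (by nlinarith [sq_nonneg z.1]) (by linarith))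
    rw [abs_le] at hzb1 hzb2
    rcases le_or_gt z.1 0 with hle | hpos1
    · refine Or.inr (Or.inl ?_)
      exact ⟨Set.mem_Ioc.mpr ⟨by linarith [hx.1], hle⟩, Set.mem_Icc.mpr ⟨hzb2.1, hzb2.2⟩⟩
    rcases le_or_gt z.2 0 with hle2 | hpos2
    · refine Or.inr (Or.inr ?_)
      exact ⟨Set.mem_Icc.mpr ⟨hzb1.1, hzb1.2⟩, Set.mem_Ioc.mpr ⟨by linarith [hy.1], hle2⟩⟩
    · exact Or.inl ⟨hpos1.le, hpos2.le, hd⟩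
  -- strip volumes
  have v1 : volume St1 = ENNReal.ofReal (a * (2 * (lam + (a+b)))) := by
    rw [hSt1, Measure.volume_eq_prod, Measure.prod_prod, Real.volume_Ioc, Real.volume_Icc,
      ← ENNReal.ofReal_mul (by linarith)]
    congr 1; ring
  have v2 : volume St2 = ENNReal.ofReal (b * (2 * (lam + (a+b)))) := by
    rw [hSt2, Measure.volume_eq_prod, Measure.prod_prod, Real.volume_Icc, Real.volume_Ioc,
      ← ENNReal.ofReal_mul (by linarith)]
    · congr 1; ring
  have hub : (F.card : ENNReal) * ENNReal.ofReal (a * b)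
      ≤ ENNReal.ofReal (π * (lam + (a+b)) ^ 2 / 4
        + (a * (2 * (lam + (a+b))) + b * (2 * (lam + (a+b))))) := by
    rw [← hvolU]
    calc volume (⋃ p ∈ F, B p) ≤ volume Qc + (volume St1 + volume St2) :=
          (measure_mono hup).trans ((measure_union_le _ _).trans
            (add_le_add le_rfl (measure_union_le _ _)))
      _ = ENNReal.ofReal (π * (lam + (a+b)) ^ 2 / 4
          + (a * (2 * (lam + (a+b))) + b * (2 * (lam + (a+b))))) := by
          rw [hQc, vol_quarter _ (by linarith), v1, v2,
            ← ENNReal.ofReal_add (mul_nonneg ha.le (by linarith)) (mul_nonneg hb.le (by linarith)),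
            ← ENNReal.ofReal_add (by positivity)
              (add_nonneg (mul_nonneg ha.le (by linarith)) (mul_nonneg hb.le (by linarith)))]
  -- lower inclusion
  have hlow : {z : ℝ × ℝ | 0 < z.1 ∧ 0 < z.2 ∧ z.1 ^ 2 + z.2 ^ 2 ≤ (lam - (a+b)) ^ 2}
      ⊆ ⋃ p ∈ F, B p := by
    rintro z ⟨hz1, hz2, hzd⟩
    have hzb1 : |z.1| ≤ lam - (a+b) := abs_le.mpr
      (abs_le_of_sq_le_sq' (by nlinarith [sq_nonneg z.2]) (by linarith))
    have hzb2 : |z.2| ≤ lam - (a+b) := abs_le.mpr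
      (abs_le_of_sq_le_sq' (by nlinarith [sq_nonneg z.1]) (by linarith))
    set n : ℤ := ⌈z.1 / a⌉ with hn
    set m : ℤ := ⌈z.2 / b⌉ with hm
    have hn1 : 0 < n := Int.ceil_pos.mpr (div_pos hz1 ha)
    have hm1 : 0 < m := Int.ceil_pos.mpr (div_pos hz2 hb)
    have hxmem : z.1 ∈ Set.Ioc ((n:ℝ) * a - a) ((n:ℝ) * a) := (mem_ioc_iff_ceil0 ha z.1 n).mpr rfl
    have hymem : z.2 ∈ Set.Ioc ((m:ℝ) * b - b) ((m:ℝ) * b) := (mem_ioc_iff_ceil0 hb z.2 m).mpr rfl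
    have hnr : ((n.toNat:ℕ) : ℝ) = (n:ℝ) := by
      exact_mod_cast congrArg (Int.cast : ℤ → ℝ) (Int.toNat_of_nonneg hn1.le)
    have hmr : ((m.toNat:ℕ) : ℝ) = (m:ℝ) := by
      exact_mod_cast congrArg (Int.cast : ℤ → ℝ) (Int.toNat_of_nonneg hm1.le)
    have hmemS : (n.toNat, m.toNat) ∈ S := by
      constructor
      · intro hcon
        have : n.toNat = 0 := congrArg Prod.fst hcon
        omega
      · show ((n.toNat:ℝ) * a) ^ 2 + ((m.toNat:ℝ) * b) ^ 2 ≤ lam ^ 2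
        rw [hnr, hmr]
        obtain ⟨hu1, hu2⟩ := hxmem
        obtain ⟨hv1, hv2⟩ := hymem
        have habs1 : |(n:ℝ) * a - z.1| ≤ a := abs_le.mpr ⟨by linarith, by linarith⟩
        have habs2 : |(m:ℝ) * b - z.2| ≤ b := abs_le.mpr ⟨by linarith, by linarith⟩
        have t1 : z.1 * ((n:ℝ) * a - z.1) ≤ (lam - (a+b)) * a := le_trans (le_abs_self _)
          (by rw [abs_mul]; exact mul_le_mul hzb1 habs1 (abs_nonneg _) (by linarith))
        have t2 : z.2 * ((m:ℝ) * b - z.2) ≤ (lam - (a+b)) * b := le_trans (le_abs_self _)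
          (by rw [abs_mul]; exact mul_le_mul hzb2 habs2 (abs_nonneg _) (by linarith))
        have t3 : ((n:ℝ) * a - z.1) ^ 2 ≤ a ^ 2 := by
          rw [← sq_abs]; exact pow_le_pow_left₀ (abs_nonneg _) habs1 2
        have t4 : ((m:ℝ) * b - z.2) ^ 2 ≤ b ^ 2 := by
          rw [← sq_abs]; exact pow_le_pow_left₀ (abs_nonneg _) habs2 2
        nlinarith [t1, t2, t3, t4, hzd, mul_pos ha hb]
    refine Set.mem_biUnion (hfin.mem_toFinset.mpr hmemS) ?_
    refine ⟨?_, ?_⟩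
    · show z.1 ∈ Set.Ioc ((n.toNat:ℝ) * a - a) ((n.toNat:ℝ) * a)
      rw [hnr]; exact hxmem
    · show z.2 ∈ Set.Ioc ((m.toNat:ℝ) * b - b) ((m.toNat:ℝ) * b)
      rw [hmr]; exact hymem
  have hlb : ENNReal.ofReal (π * (lam - (a+b)) ^ 2 / 4)
      ≤ (F.card : ENNReal) * ENNReal.ofReal (a * b) := by
    rw [← hvolU, ← vol_quarter_open _ (by linarith : (0:ℝ) ≤ lam - (a+b))]
    exact measure_mono hlow
  have hcast : (F.card : ENNReal) * ENNReal.ofReal (a * b)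
      = ENNReal.ofReal ((F.card : ℝ) * (a * b)) := by
    rw [← ENNReal.ofReal_natCast F.card, ← ENNReal.ofReal_mul (Nat.cast_nonneg _)]
  rw [hcast] at hub hlb
  have key2 : (F.card : ℝ) * (a * b) ≤ π * (lam + (a+b)) ^ 2 / 4
      + (a * (2 * (lam + (a+b))) + b * (2 * (lam + (a+b)))) :=
    (ENNReal.ofReal_le_ofReal_iff (by positivity)).mp hub
  have key1 : π * (lam - (a+b)) ^ 2 / 4 ≤ (F.card : ℝ) * (a * b) :=
    (ENNReal.ofReal_le_ofReal_iff (mul_nonneg (Nat.cast_nonneg _) (mul_pos ha hb).le)).mp hlb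
  have hncard : (S.ncard : ℝ) = (F.card : ℝ) := by
    rw [Set.ncard_eq_toFinset_card S hfin]
  rw [hncard]
  exact sandwich_arith_q a b lam _ ha hb hlam key1 key2

open Filter Asymptotics

theorem stmt_11 (a b : ℝ) (ha : 0 < a) (hb : 0 < b) (c d : ℝ) :
    ∃ ε > (0 : ℝ),
      (fun lam : ℝ =>
          ((Nat.card {p : ℤ × ℤ //
              (c + (p.1 : ℝ) * a) ^ 2 + (d + (p.2 : ℝ) * b) ^ 2 ≤ lam ^ 2} : ℝ)
            + (Nat.card {p : ℕ × ℕ // p ≠ (0, 0) ∧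
                ((p.1 : ℝ) * a) ^ 2 + ((p.2 : ℝ) * b) ^ 2 ≤ lam ^ 2} : ℝ))
            - 5 * Real.pi / (4 * a * b) * lam ^ 2)
        =O[atTop] fun lam : ℝ => 5 * Real.pi / (4 * a * b) * lam ^ 2 * lam ^ (-ε) := by
  refine ⟨1, one_pos, ?_⟩
  rw [Asymptotics.isBigO_iff]
  set C1 : ℝ := 3 * π * (a + b) / (a * b) with hC1
  set C2 : ℝ := (3 * π * (a + b) / 4 + 8 * (a + b)) / (a * b) with hC2
  have hC1pos : 0 < C1 := by
    rw [hC1]; positivity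
  have hC2pos : 0 < C2 := by
    rw [hC2]; positivity
  refine ⟨(C1 + C2) * (4 * a * b) / (5 * π), ?_⟩
  filter_upwards [Filter.eventually_ge_atTop (max (a + b) 1)] with lam hlam
  have h1 : a + b ≤ lam := le_trans (le_max_left _ _) hlam
  have hlam1 : (1:ℝ) ≤ lam := le_trans (le_max_right _ _) hlam
  have hlampos : (0:ℝ) < lam := lt_of_lt_of_le one_pos hlam1
  obtain ⟨hfin1, hb1⟩ := count_full a b ha hb c d lam h1
  obtain ⟨hfin2, hb2⟩ := count_quarter a b ha hb lam h1
  have e1 : (Nat.card {p : ℤ × ℤ //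
      (c + (p.1 : ℝ) * a) ^ 2 + (d + (p.2 : ℝ) * b) ^ 2 ≤ lam ^ 2} : ℕ)
      = {p : ℤ × ℤ | (c + (p.1 : ℝ) * a) ^ 2 + (d + (p.2 : ℝ) * b) ^ 2 ≤ lam ^ 2}.ncard :=
    Nat.card_coe_set_eq _
  have e2 : (Nat.card {p : ℕ × ℕ // p ≠ (0, 0) ∧
      ((p.1 : ℝ) * a) ^ 2 + ((p.2 : ℝ) * b) ^ 2 ≤ lam ^ 2} : ℕ)
      = {p : ℕ × ℕ | p ≠ (0, 0) ∧ ((p.1 : ℝ) * a) ^ 2 + ((p.2 : ℝ) * b) ^ 2 ≤ lam ^ 2}.ncard :=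
    Nat.card_coe_set_eq _
  set N1 : ℝ := ({p : ℤ × ℤ | (c + (p.1 : ℝ) * a) ^ 2 + (d + (p.2 : ℝ) * b) ^ 2 ≤ lam ^ 2}.ncard : ℝ)
  set N2 : ℝ := ({p : ℕ × ℕ | p ≠ (0, 0) ∧ ((p.1 : ℝ) * a) ^ 2 + ((p.2 : ℝ) * b) ^ 2 ≤ lam ^ 2}.ncard : ℝ)
  have hsplit : 5 * π / (4 * a * b) * lam ^ 2
      = π / (a * b) * lam ^ 2 + π / (4 * (a * b)) * lam ^ 2 := by
    field_simp
    ring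
  have hmain : |N1 + N2 - 5 * π / (4 * a * b) * lam ^ 2| ≤ (C1 + C2) * lam := by
    rw [hsplit]
    calc |N1 + N2 - (π / (a * b) * lam ^ 2 + π / (4 * (a * b)) * lam ^ 2)|
        = |(N1 - π / (a * b) * lam ^ 2) + (N2 - π / (4 * (a * b)) * lam ^ 2)| := by ring_nf
      _ ≤ |N1 - π / (a * b) * lam ^ 2| + |N2 - π / (4 * (a * b)) * lam ^ 2| := abs_add_le _ _
      _ ≤ C1 * lam + C2 * lam := add_le_add hb1 hb2
      _ = (C1 + C2) * lam := by ring
  have hrpow : lam ^ (-(1:ℝ)) = lam⁻¹ := Real.rpow_neg_one lam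
  rw [Real.norm_eq_abs, Real.norm_eq_abs, hrpow]
  have hg : 5 * π / (4 * a * b) * lam ^ 2 * lam⁻¹ = 5 * π / (4 * a * b) * lam := by
    field_simp
  rw [hg, e1, e2, abs_of_nonneg (mul_nonneg (by positivity) hlampos.le)]
  refine le_trans hmain (le_of_eq ?_)
  field_simp
end
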